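/- Let Z be a chi-squared random variable with n degrees of freedom (n ≥ 1). Then for all x ≥ 0, P(Z ≤ n·e^{−(1+2x/n)}) ≤ e^{−x}. -/

import Mathlib

open MeasureTheory ProbabilityTheory Real Set
open scoped ENNReal NNReal

lemma gamma_laplace {a r l : ℝ} (ha : 0 < a) (hr : 0 < r) (hl : 0 ≤ l) :
    ∫⁻ z, ENNReal.ofReal (Real.exp (-(l * z))) * gammaPDF a r z
      = ENNReal.ofReal ((r / (r + l)) ^ a) := by
  have hrl : 0 < r + l := by linarith
  have hpt : ∀ z, ENNReal.ofReal (Real.exp (-(l * z))) * gammaPDF a r z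
      = ENNReal.ofReal ((r / (r + l)) ^ a) * gammaPDF a (r + l) z := by
    intro z
    rcases lt_or_ge z 0 with hz | hz
    · rw [gammaPDF_of_neg hz, gammaPDF_of_neg hz, mul_zero, mul_zero]
    · rw [gammaPDF_of_nonneg hz, gammaPDF_of_nonneg hz,
        ← ENNReal.ofReal_mul (Real.exp_nonneg _), ← ENNReal.ofReal_mul (by positivity)]
      congr 1
      rw [Real.div_rpow hr.le hrl.le]
      have hG : 0 < Real.Gamma a := Real.Gamma_pos_of_pos ha
      have hrpa : (0:ℝ) < (r + l) ^ a := Real.rpow_pos_of_pos hrl a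
      have hexp : Real.exp (-(l * z)) * Real.exp (-(r * z)) = Real.exp (-((r + l) * z)) := by
        rw [← Real.exp_add]; ring_nf
      rw [← hexp]
      field_simp
  simp_rw [hpt]
  rw [lintegral_const_mul' _ _ ENNReal.ofReal_ne_top,
    lintegral_gammaPDF_eq_one ha hrl, mul_one]

theorem chi_squared_lower_tail
    {Ω : Type*} [MeasurableSpace Ω] (P : Measure Ω) [IsProbabilityMeasure P]
    (n : ℕ) (hn : 1 ≤ n) (Z : Ω → ℝ) (hmeas : Measurable Z)
    (hZ : Measure.map Z P = gammaMeasure ((n : ℝ) / 2) (1 / 2))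
    (x : ℝ) (hx : 0 ≤ x) :
    P {ω | Z ω ≤ (n : ℝ) * Real.exp (-(1 + 2 * x / n))} ≤ ENNReal.ofReal (Real.exp (-x)) := by
  have hn1 : (1:ℝ) ≤ n := by exact_mod_cast hn
  have hn0 : (0:ℝ) < n := by linarith
  set c : ℝ := 1 + 2 * x / n with hc_def
  have hc : 1 ≤ c := by
    have : 0 ≤ 2 * x / n := by positivity
    simp only [hc_def]; linarith
  set l : ℝ := (Real.exp c - 1) / 2 with hl_def
  have hl : 0 ≤ l := by
    have := Real.one_le_exp (by linarith : (0:ℝ) ≤ c)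
    simp only [hl_def]; linarith
  set a : ℝ := (n : ℝ) / 2 with ha_def
  have ha : 0 < a := by positivity
  set t : ℝ := (n : ℝ) * Real.exp (-c) with ht_def
  clear_value c l a t
  have hmg : Measurable fun z : ℝ => ENNReal.ofReal (Real.exp (l * t)) *
      (ENNReal.ofReal (Real.exp (-(l * z))) * gammaPDF a (1/2) z) :=
    measurable_const.mul
      ((((measurable_id.const_mul l).neg.exp.ennreal_ofReal).mul
        ((measurable_gammaPDFReal a (1/2)).ennreal_ofReal)))
  have hset : {ω | Z ω ≤ t} = Z ⁻¹' Iic t := rfl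
  rw [hset, ← Measure.map_apply hmeas measurableSet_Iic, hZ, gammaMeasure,
    withDensity_apply _ measurableSet_Iic]
  calc ∫⁻ z in Iic t, gammaPDF a (1/2) z
      ≤ ∫⁻ z in Iic t, ENNReal.ofReal (Real.exp (l * t)) *
          (ENNReal.ofReal (Real.exp (-(l * z))) * gammaPDF a (1/2) z) := by
        refine setLIntegral_mono hmg fun z hz => ?_
        have hz' : z ≤ t := hz
        conv_lhs => rw [← one_mul (gammaPDF a (1/2) z)]
        rw [← mul_assoc, ← ENNReal.ofReal_mul (Real.exp_nonneg _), ← Real.exp_add]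
        gcongr
        exact ENNReal.one_le_ofReal.mpr (Real.one_le_exp (by nlinarith))
    _ ≤ ∫⁻ z, ENNReal.ofReal (Real.exp (l * t)) *
          (ENNReal.ofReal (Real.exp (-(l * z))) * gammaPDF a (1/2) z) :=
        setLIntegral_le_lintegral _ _
    _ = ENNReal.ofReal (Real.exp (l * t)) *
          ∫⁻ z, ENNReal.ofReal (Real.exp (-(l * z))) * gammaPDF a (1/2) z :=
        lintegral_const_mul' _ _ ENNReal.ofReal_ne_top
    _ = ENNReal.ofReal (Real.exp (l * t)) *
          ENNReal.ofReal (((1/2) / ((1/2) + l)) ^ a) := by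
        rw [gamma_laplace ha (by norm_num) hl]
    _ ≤ ENNReal.ofReal (Real.exp (-x)) := by
        rw [← ENNReal.ofReal_mul (Real.exp_nonneg _)]
        apply ENNReal.ofReal_le_ofReal
        have hec : 0 < Real.exp c := Real.exp_pos _
        have hhalf : (1/2 : ℝ) / ((1/2) + l) = Real.exp (-c) := by
          rw [hl_def, Real.exp_neg]
          field_simp
          ring
        rw [hhalf, ← Real.exp_mul, ← Real.exp_add]
        apply Real.exp_le_exp.mpr
        have he : Real.exp c * Real.exp (-c) = 1 := by
          rw [← Real.exp_add]; simp
        have he2 : 0 < Real.exp (-c) := Real.exp_pos _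
        have hca : c * a = n/2 + x := by
          rw [hc_def, ha_def]; field_simp
        have hlt : l * t = (n:ℝ)/2 * (1 - Real.exp (-c)) := by
          rw [hl_def, ht_def]; linear_combination ((n:ℝ)/2) * he
        nlinarith [hca, hlt, he2, hn0, mul_pos hn0 he2]
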